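/- Let A be an n×n real matrix, B an n×m real matrix, P a symmetric positive definite n×n matrix, and α > 0 a real number such that AP + PAᵀ + αP + (1/α)BBᵀ ⪯ 0 (negative semidefinite). Then for every solution of x'(t) = Ax(t) + Bw(t) with ‖w(t)‖ ≤ 1 for all t, the function V(t) = x(t)ᵀP⁻¹x(t) satisfies: V(t₀) ≤ 1 implies V(t) ≤ 1 for all t ≥ t₀. -/

import Mathlib

open Matrix

theorem stmt_10 (n m : ℕ)
    (A : Matrix (Fin n) (Fin n) ℝ) (B : Matrix (Fin n) (Fin m) ℝ)
    (P : Matrix (Fin n) (Fin n) ℝ) (hP : P.PosDef) (α : ℝ) (hα : 0 < α)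
    (hLyap : (-(A * P + P * Aᵀ + α • P + α⁻¹ • (B * Bᵀ))).PosSemidef)
    (x : ℝ → Fin n → ℝ) (w : ℝ → Fin m → ℝ)
    (hw : ∀ t, ∑ i, (w t i) ^ 2 ≤ 1)
    (hx : ∀ t i, HasDerivAt (fun s => x s i) ((A.mulVec (x t) + B.mulVec (w t)) i) t)
    (t₀ : ℝ) (h0 : x t₀ ⬝ᵥ P⁻¹.mulVec (x t₀) ≤ 1) :
    ∀ t ≥ t₀, x t ⬝ᵥ P⁻¹.mulVec (x t) ≤ 1 := by
  set Q := P⁻¹ with hQdef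
  have hQ : Q.PosDef := hP.inv
  have hQsymm : Qᵀ = Q := by
    have := hQ.1
    simpa [Matrix.IsHermitian, Matrix.conjTranspose_eq_transpose_of_trivial] using this
  have hPsymm : Pᵀ = P := by
    have := hP.1
    simpa [Matrix.IsHermitian, Matrix.conjTranspose_eq_transpose_of_trivial] using this
  have hPQ : P * Q = 1 := Matrix.mul_nonsing_inv P (isUnit_iff_ne_zero.mpr hP.det_pos.ne')
  -- notation
  set V : ℝ → ℝ := fun t => x t ⬝ᵥ Q *ᵥ x t with hVdef
  set x' : ℝ → Fin n → ℝ := fun t => A *ᵥ x t + B *ᵥ w t with hx'def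
  -- derivative of V
  have hVderiv : ∀ t, HasDerivAt V (x' t ⬝ᵥ Q *ᵥ x t + x t ⬝ᵥ Q *ᵥ x' t) t := by
    intro t
    have h : HasDerivAt (fun s => ∑ i, ∑ j, x s i * (Q i j * x s j))
        (∑ i, ∑ j, (x' t i * (Q i j * x t j) + x t i * (Q i j * x' t j))) t := by
      apply HasDerivAt.fun_sum
      intro i _
      apply HasDerivAt.fun_sum
      intro j _
      exact (hx t i).mul ((hx t j).const_mul (Q i j))
    convert h using 1
    · funext s
      simp [hVdef, dotProduct, Matrix.mulVec, Finset.mul_sum]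
    · simp [dotProduct, Matrix.mulVec, Finset.mul_sum, Finset.sum_add_distrib]
  -- key differential inequality
  have hkey : ∀ t, x' t ⬝ᵥ Q *ᵥ x t + x t ⬝ᵥ Q *ᵥ x' t ≤ α * (1 - V t) := by
    intro t
    set y := Q *ᵥ x t with hy
    set z := Bᵀ *ᵥ y with hz
    have hvm : ∀ v : Fin n → ℝ, v ᵥ* Q = Q *ᵥ v := by
      intro v
      conv_lhs => rw [← hQsymm]
      rw [Matrix.vecMul_transpose]
    have hPy : P *ᵥ y = x t := by
      rw [hy, Matrix.mulVec_mulVec, hPQ, Matrix.one_mulVec]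
    -- LMI applied to y
    have hlmi : y ⬝ᵥ (A * P + P * Aᵀ + α • P + α⁻¹ • (B * Bᵀ)) *ᵥ y ≤ 0 := by
      have := hLyap.dotProduct_mulVec_nonneg y
      simp only [Matrix.neg_mulVec, dotProduct_neg, star_trivial] at this
      linarith
    have e1 : y ⬝ᵥ (A * P) *ᵥ y = y ⬝ᵥ (A *ᵥ x t) := by
      rw [← Matrix.mulVec_mulVec, hPy]
    have e2 : y ⬝ᵥ (P * Aᵀ) *ᵥ y = (A *ᵥ x t) ⬝ᵥ y := by
      have hyP : y ᵥ* P = x t := by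
        conv_lhs => rw [← hPsymm]
        rw [Matrix.vecMul_transpose]
        exact hPy
      rw [Matrix.dotProduct_mulVec, ← Matrix.vecMul_vecMul, hyP, Matrix.vecMul_transpose]
    have e3 : y ⬝ᵥ (α • P) *ᵥ y = α * (x t ⬝ᵥ y) := by
      rw [Matrix.smul_mulVec, dotProduct_smul, hPy, smul_eq_mul,
        dotProduct_comm]
    have e4 : y ⬝ᵥ (α⁻¹ • (B * Bᵀ)) *ᵥ y = α⁻¹ * (z ⬝ᵥ z) := by
      rw [Matrix.smul_mulVec, dotProduct_smul, smul_eq_mul,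
        ← Matrix.mulVec_mulVec, hz, Matrix.dotProduct_mulVec, ← Matrix.mulVec_transpose]
    have hlmi' : y ⬝ᵥ (A *ᵥ x t) + (A *ᵥ x t) ⬝ᵥ y + α * (x t ⬝ᵥ y) + α⁻¹ * (z ⬝ᵥ z) ≤ 0 := by
      have expand : y ⬝ᵥ (A * P + P * Aᵀ + α • P + α⁻¹ • (B * Bᵀ)) *ᵥ y
          = y ⬝ᵥ (A * P) *ᵥ y + y ⬝ᵥ (P * Aᵀ) *ᵥ y + y ⬝ᵥ (α • P) *ᵥ y
            + y ⬝ᵥ (α⁻¹ • (B * Bᵀ)) *ᵥ y := by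
        simp [Matrix.add_mulVec, dotProduct_add]
      rw [expand, e1, e2, e3, e4] at hlmi
      linarith
    -- cross term estimate
    have hcross : 2 * (z ⬝ᵥ w t) ≤ α * (w t ⬝ᵥ w t) + α⁻¹ * (z ⬝ᵥ z) := by
      have h0 : (0:ℝ) ≤ (α • w t - z) ⬝ᵥ (α • w t - z) := by
        simp only [dotProduct, Pi.sub_apply, Pi.smul_apply, smul_eq_mul]
        apply Finset.sum_nonneg
        intro i _
        exact mul_self_nonneg _
      have expand : (α • w t - z) ⬝ᵥ (α • w t - z)
          = α * α * (w t ⬝ᵥ w t) - 2 * α * (z ⬝ᵥ w t) + z ⬝ᵥ z := by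
        simp only [dotProduct, Pi.sub_apply, Pi.smul_apply, smul_eq_mul,
          Finset.mul_sum, ← Finset.sum_add_distrib, ← Finset.sum_sub_distrib]
        apply Finset.sum_congr rfl
        intro i _
        ring
      rw [expand] at h0
      have h1 : 2 * α * (z ⬝ᵥ w t) ≤ α * α * (w t ⬝ᵥ w t) + z ⬝ᵥ z := by linarith
      have := mul_le_mul_of_nonneg_left h1 (le_of_lt (inv_pos.mpr hα))
      calc 2 * (z ⬝ᵥ w t) = α⁻¹ * (2 * α * (z ⬝ᵥ w t)) := by
            field_simp
        _ ≤ α⁻¹ * (α * α * (w t ⬝ᵥ w t) + z ⬝ᵥ z) := this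
        _ = α * (w t ⬝ᵥ w t) + α⁻¹ * (z ⬝ᵥ z) := by field_simp
    have hww : w t ⬝ᵥ w t ≤ 1 := by
      have := hw t
      simpa [dotProduct, pow_two] using this
    -- rewrite the derivative
    have d1 : x' t ⬝ᵥ Q *ᵥ x t = (A *ᵥ x t) ⬝ᵥ y + z ⬝ᵥ w t := by
      show (A *ᵥ x t + B *ᵥ w t) ⬝ᵥ y = _
      rw [add_dotProduct]
      congr 1
      rw [dotProduct_comm, Matrix.dotProduct_mulVec, ← Matrix.mulVec_transpose, ← hz]
    have d2 : x t ⬝ᵥ Q *ᵥ x' t = (A *ᵥ x t) ⬝ᵥ y + z ⬝ᵥ w t := by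
      rw [Matrix.dotProduct_mulVec, hvm]
      show y ⬝ᵥ (A *ᵥ x t + B *ᵥ w t) = _
      rw [dotProduct_add]
      congr 1
      · exact dotProduct_comm _ _
      · rw [Matrix.dotProduct_mulVec, ← Matrix.mulVec_transpose, ← hz]
    have hVy : V t = x t ⬝ᵥ y := rfl
    rw [d1, d2]
    have : (A *ᵥ x t) ⬝ᵥ y + (A *ᵥ x t) ⬝ᵥ y ≤ -α * (x t ⬝ᵥ y) - α⁻¹ * (z ⬝ᵥ z) := by
      have hyA : y ⬝ᵥ (A *ᵥ x t) = (A *ᵥ x t) ⬝ᵥ y := dotProduct_comm _ _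
      rw [hyA] at hlmi'
      linarith
    have hα1 : α * (w t ⬝ᵥ w t) ≤ α := by
      nlinarith
    rw [hVy]
    nlinarith [hcross, this]
  -- Gronwall argument
  set g : ℝ → ℝ := fun t => (V t - 1) * Real.exp (α * t) with hgdef
  have hgderiv : ∀ t, HasDerivAt g
      ((x' t ⬝ᵥ Q *ᵥ x t + x t ⬝ᵥ Q *ᵥ x' t) * Real.exp (α * t)
        + (V t - 1) * (α * Real.exp (α * t))) t := by
    intro t
    have h1 : HasDerivAt (fun s => V s - 1) (x' t ⬝ᵥ Q *ᵥ x t + x t ⬝ᵥ Q *ᵥ x' t) t :=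
      (hVderiv t).sub_const 1
    have h2 : HasDerivAt (fun s => Real.exp (α * s)) (α * Real.exp (α * t)) t := by
      have := (Real.hasDerivAt_exp (α * t)).comp t ((hasDerivAt_id t).const_mul α)
      simpa [mul_comm, Function.comp_def] using this
    simpa [Pi.mul_def] using h1.mul h2
  have hganti : Antitone g := by
    apply antitone_of_deriv_nonpos
    · intro t
      exact (hgderiv t).differentiableAt
    · intro t
      rw [(hgderiv t).deriv]
      have hk := hkey t
      have hexp : (0:ℝ) < Real.exp (α * t) := Real.exp_pos _
      nlinarith
  intro t ht
  have h1 : g t ≤ g t₀ := hganti ht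
  have h2 : g t₀ ≤ 0 := by
    have : V t₀ - 1 ≤ 0 := by simpa [hVdef] using sub_nonpos.mpr h0
    exact mul_nonpos_of_nonpos_of_nonneg this (Real.exp_pos _).le
  have h3 : (V t - 1) * Real.exp (α * t) ≤ 0 := le_trans h1 h2
  have hexp : (0:ℝ) < Real.exp (α * t) := Real.exp_pos _
  have h4 : V t - 1 ≤ 0 := by
    by_contra h
    push_neg at h
    nlinarith
  show V t ≤ 1
  linarith
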